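/- For all integers n ≥ 3 and m ≥ 56·binom(n,3), every probability distribution D in D_2(n,m) satisfies Pr_{C∼D}[SAT(C)] ≤ 56·binom(n,3)/m. -/

import Mathlib

open scoped Classical

/-- A literal over `n` Boolean variables: a (variable, sign) pair. -/
abbrev Lit (n : ℕ) := Fin n × Bool

/-- A clause: a set of three literals whose three variables are pairwise distinct. -/
abbrev Clause (n : ℕ) :=
  {s : Finset (Lit n) // s.card = 3 ∧ (s.image Prod.fst).card = 3}

/-- A 3-SAT instance: a sequence of `m` clauses over `n` variables. -/
abbrev SatInstance (n m : ℕ) := Fin m → Clause n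

/-- The assignment `σ` makes at least one literal of clause `c` true. -/
def Satisfies {n : ℕ} (σ : Fin n → Bool) (c : Clause n) : Prop :=
  ∃ ℓ ∈ c.1, σ ℓ.1 = ℓ.2

/-- The instance `C` is satisfiable. -/
def SAT {n m : ℕ} (C : SatInstance n m) : Prop :=
  ∃ σ : Fin n → Bool, ∀ i, Satisfies σ (C i)

/-- Probability of the event `P` under the distribution (weight function) `D`. -/
noncomputable def pr {α : Type*} [Fintype α] (D : α → ℝ) (P : α → Prop) : ℝ :=
  ∑ a ∈ Finset.univ.filter P, D a

/-- `D` is a probability distribution on the finite type `α`. -/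
def IsDistribution {α : Type*} [Fintype α] (D : α → ℝ) : Prop :=
  (∀ a, 0 ≤ D a) ∧ ∑ a, D a = 1

/-- The clauses of a random instance drawn from `D` are `k`-wise independent with
uniform marginals: any `k` clauses at distinct positions are jointly uniform,
each over the `M = 8 * (n choose 3)` possible clauses.
`IsDistribution D ∧ KWiseUniform n m k D` says `D ∈ 𝔇_k(n,m)`. -/
def KWiseUniform (n m k : ℕ) (D : SatInstance n m → ℝ) : Prop :=
  ∀ idx : Fin k → Fin m, Function.Injective idx →
    ∀ t : Fin k → Clause n,
      pr D (fun C => ∀ j, C (idx j) = t j) = (1 / (8 * (n.choose 3 : ℝ))) ^ k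

/-- `ξ(C)`: the number of unordered pairs `{i, j}` with `i ≠ j` and `c_i = c_j`. -/
noncomputable def xi {n m : ℕ} (C : SatInstance n m) : ℕ :=
  (Finset.univ.filter fun p : Fin m × Fin m => p.1 < p.2 ∧ C p.1 = C p.2).card

/-- An edge index of the bipartite multigraph `G(C)`: a clause position together with the
literal serving as the right endpoint (the left endpoint is the remaining literal pair). -/
abbrev EdgeIdx (n m : ℕ) := Fin m × Lit n

/-- `e` is an actual edge of the multigraph `G(C)`. -/
def isEdge {n m : ℕ} (C : SatInstance n m) (e : EdgeIdx n m) : Prop :=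
  e.2 ∈ (C e.1).1

/-- The left endpoint (pair of literals) of the edge `e` of `G(C)`. -/
def leftV {n m : ℕ} (C : SatInstance n m) (e : EdgeIdx n m) : Finset (Lit n) :=
  (C e.1).1.erase e.2

/-- `s` is a `K_{2,2}`-edge-set of the multigraph `G(C)`: four edges of the form
`u–v, u–v', u'–v, u'–v'` with `u ≠ u'` and `v ≠ v'`. -/
def IsK22 {n m : ℕ} (C : SatInstance n m) (s : Finset (EdgeIdx n m)) : Prop :=
  s.card = 4 ∧ (∀ e ∈ s, isEdge C e) ∧
  ∃ u u' : Finset (Lit n), ∃ v v' : Lit n, u ≠ u' ∧ v ≠ v' ∧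
    s.image (fun e => (leftV C e, e.2)) = {(u, v), (u, v'), (u', v), (u', v')}

/-- `κ(C)`: the number of `K_{2,2}`-edge-sets of the multigraph `G(C)`. -/
noncomputable def kappa {n m : ℕ} (C : SatInstance n m) : ℕ :=
  (Finset.univ.filter fun s : Finset (EdgeIdx n m) => IsK22 C s).card

/-- Adjacency in the simple bipartite graph `G(C̃)` of a set `T` of distinct clauses:
the literal pair `u` is adjacent to the literal `v`. -/
def adjSet {n : ℕ} (T : Finset (Clause n)) (u : Finset (Lit n)) (v : Lit n) : Prop :=
  v ∉ u ∧ ∃ c ∈ T, c.1 = insert v u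

/-- `κ(C̃)` for a set `T` of pairwise distinct clauses: the number of `K_{2,2}` subgraphs of
the simple bipartite graph `G(C̃)`, computed as `Σ_{{v,v'}} binom(|B_{v,v'}|, 2)`. -/
noncomputable def kappaSet {n : ℕ} (T : Finset (Clause n)) : ℕ :=
  ∑ p ∈ (Finset.univ : Finset (Lit n)).powersetCard 2,
    ((Finset.univ.filter fun u : Finset (Lit n) => ∀ v ∈ p, adjSet T u v).card).choose 2

/-- `m̃(C)`: the number of pairwise distinct clauses occurring in `C`. -/
noncomputable def distinctCount {n m : ℕ} (C : SatInstance n m) : ℕ :=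
  (Finset.univ.image C).card

/-- The set of the three variables of a clause. -/
def clVars {n : ℕ} (c : Clause n) : Finset (Fin n) := c.1.image Prod.fst

/-- `f` lists (the indices of) hyperedges of the variable hypergraph of `C` forming a
Berge path: consecutive hyperedges share exactly one vertex, non-consecutive ones
are disjoint. -/
def IsBergePathOrder {n m : ℕ} (C : SatInstance n m) {k : ℕ} (f : Fin k → Fin m) : Prop :=
  Function.Injective f ∧
  (∀ i j : Fin k, (j : ℕ) = (i : ℕ) + 1 →
    (clVars (C (f i)) ∩ clVars (C (f j))).card = 1) ∧
  (∀ i j : Fin k, i ≠ j → (j : ℕ) ≠ (i : ℕ) + 1 → (i : ℕ) ≠ (j : ℕ) + 1 →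
    Disjoint (clVars (C (f i))) (clVars (C (f j))))

/-- `j` follows `i` cyclically in `Fin ℓ`. -/
def CycConsec (ℓ : ℕ) (i j : Fin ℓ) : Prop := (j : ℕ) = ((i : ℕ) + 1) % ℓ

/-- `f` lists (the indices of) hyperedges of the variable hypergraph of `C` forming a
Berge cycle (of length `ℓ ≥ 3`): cyclically consecutive hyperedges share exactly one
vertex, non-consecutive ones are disjoint. -/
def IsBergeCycleOrder {n m : ℕ} (C : SatInstance n m) {ℓ : ℕ} (f : Fin ℓ → Fin m) : Prop :=
  Function.Injective f ∧
  (∀ i j : Fin ℓ, CycConsec ℓ i j →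
    (clVars (C (f i)) ∩ clVars (C (f j))).card = 1) ∧
  (∀ i j : Fin ℓ, i ≠ j → ¬ CycConsec ℓ i j → ¬ CycConsec ℓ j i →
    Disjoint (clVars (C (f i))) (clVars (C (f j))))

/-- The number of `k`-element sets of hyperedge indices of the variable hypergraph of `C`
that form a Berge path of length `k`. -/
noncomputable def bergePathSetCount (n m k : ℕ) (C : SatInstance n m) : ℕ :=
  (Finset.univ.filter fun s : Finset (Fin m) =>
    s.card = k ∧ ∃ f : Fin k → Fin m, (∀ i, f i ∈ s) ∧ IsBergePathOrder C f).card

/-- The number of `ℓ`-element sets of hyperedge indices of the variable hypergraph of `C`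
that form a Berge cycle of length `ℓ`. -/
noncomputable def bergeCycleSetCount (n m ℓ : ℕ) (C : SatInstance n m) : ℕ :=
  (Finset.univ.filter fun s : Finset (Fin m) =>
    s.card = ℓ ∧ ∃ f : Fin ℓ → Fin m, (∀ i, f i ∈ s) ∧ IsBergeCycleOrder C f).card


/-! ### Auxiliary lemmas for `stmt0` -/

section Stmt0Aux

variable {n m : ℕ}

/-- `collCount C` is the number of ordered pairs `(i, j)` (including the diagonal)
with `c_i = c_j`; it equals `∑_t N_t²`. -/
private noncomputable def collCount (C : SatInstance n m) : ℕ :=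
  (Finset.univ.filter fun p : Fin m × Fin m => C p.1 = C p.2).card

private theorem pair_pr (D : SatInstance n m → ℝ) (h2 : KWiseUniform n m 2 D)
    (i j : Fin m) (hij : i ≠ j) (t t' : Clause n) :
    pr D (fun C => C i = t ∧ C j = t') = (1 / (8 * (n.choose 3 : ℝ)))^2 := by
  have hinj : Function.Injective ![i, j] := by
    intro a b hab
    fin_cases a <;> fin_cases b <;> simp_all
  have h := h2 ![i, j] hinj ![t, t']
  unfold pr at h ⊢
  rw [← h]
  apply Finset.sum_congr _ (fun _ _ => rfl)
  ext C
  simp [Fin.forall_fin_two]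

private theorem total_pair (D : SatInstance n m → ℝ) (i j : Fin m) :
    ∑ tt' : Clause n × Clause n, pr D (fun C => C i = tt'.1 ∧ C j = tt'.2) = ∑ C, D C := by
  unfold pr
  rw [← Finset.sum_fiberwise_of_maps_to (g := fun C : SatInstance n m => (C i, C j))
      (t := Finset.univ) (fun a _ => Finset.mem_univ _) D]
  apply Finset.sum_congr rfl
  intro tt' _
  apply Finset.sum_congr _ (fun _ _ => rfl)
  ext C
  simp [Prod.ext_iff]

private theorem coll_pr_decomp (D : SatInstance n m → ℝ) (i j : Fin m) :
    pr D (fun C => C i = C j) = ∑ t : Clause n, pr D (fun C => C i = t ∧ C j = t) := by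
  unfold pr
  rw [← Finset.sum_fiberwise_of_maps_to (g := fun C : SatInstance n m => C i)
      (t := Finset.univ) (fun a _ => Finset.mem_univ _) D]
  apply Finset.sum_congr rfl
  intro t _
  apply Finset.sum_congr _ (fun _ _ => rfl)
  ext C
  simp only [Finset.mem_filter, Finset.mem_univ, true_and]
  constructor
  · rintro ⟨h1, h2⟩; exact ⟨h2, h1 ▸ h2⟩
  · rintro ⟨h1, h2⟩; exact ⟨h1.trans h2.symm, h1⟩

private theorem exp_coll (D : SatInstance n m → ℝ) :
    ∑ C : SatInstance n m, D C * (collCount C : ℝ)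
    = ∑ p : Fin m × Fin m, pr D (fun C => C p.1 = C p.2) := by
  have h1 : ∀ C : SatInstance n m, (collCount C : ℝ)
      = ∑ p : Fin m × Fin m, if C p.1 = C p.2 then (1:ℝ) else 0 := by
    intro C
    rw [collCount, Finset.card_filter]
    push_cast
    rfl
  calc ∑ C : SatInstance n m, D C * (collCount C : ℝ)
      = ∑ C : SatInstance n m, ∑ p : Fin m × Fin m, (if C p.1 = C p.2 then D C else 0) := by
        apply Finset.sum_congr rfl; intro C _
        rw [h1 C, Finset.mul_sum]
        apply Finset.sum_congr rfl; intro p _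
        simp [mul_ite]
    _ = ∑ p : Fin m × Fin m, ∑ C : SatInstance n m, (if C p.1 = C p.2 then D C else 0) :=
        Finset.sum_comm
    _ = ∑ p : Fin m × Fin m, pr D (fun C => C p.1 = C p.2) := by
        apply Finset.sum_congr rfl; intro p _
        rw [pr, Finset.sum_filter]
        exact Finset.sum_congr rfl fun a _ => by by_cases h : a p.1 = a p.2 <;> simp [h]

private theorem sum_ite_pairs (z : ℝ) :
    ∑ p : Fin m × Fin m, (if p.1 = p.2 then (1:ℝ) else z) = m + ((m:ℝ)^2 - m) * z := by
  rw [Finset.sum_ite]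
  have hd : ((Finset.univ : Finset (Fin m × Fin m)).filter fun p => p.1 = p.2).card = m := by
    have : ((Finset.univ : Finset (Fin m × Fin m)).filter fun p => p.1 = p.2)
        = Finset.diag Finset.univ := by
      ext p; simp [Finset.mem_diag]
    rw [this, Finset.diag_card, Finset.card_univ, Fintype.card_fin]
  have hcards := Finset.card_filter_add_card_filter_not
    (s := (Finset.univ : Finset (Fin m × Fin m))) (p := fun p => p.1 = p.2)
  rw [Finset.card_univ] at hcards
  simp only [Fintype.card_prod, Fintype.card_fin] at hcards
  have hnd : ((Finset.univ : Finset (Fin m × Fin m)).filter fun p => ¬ p.1 = p.2).card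
      = m ^ 2 - m := by
    have : m * m = m ^ 2 := by ring
    omega
  rw [Finset.sum_const, Finset.sum_const, hd, hnd]
  rw [nsmul_eq_mul, nsmul_eq_mul, Nat.cast_sub (Nat.le_self_pow two_ne_zero m)]
  push_cast
  ring

private theorem cauchy_pointwise (C : SatInstance n m) (s : Finset (Clause n))
    (hs : ∀ i, C i ∈ s) :
    ((m:ℝ))^2 ≤ s.card * (collCount C : ℝ) := by
  set N : Clause n → ℕ := fun t => (Finset.univ.filter fun i : Fin m => C i = t).card with hN
  have hfib : ∀ t : Clause n,
      ((Finset.univ.filter fun p : Fin m × Fin m => C p.1 = C p.2).filter fun p => C p.1 = t)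
      = (Finset.univ.filter fun i : Fin m => C i = t) ×ˢ
        (Finset.univ.filter fun i : Fin m => C i = t) := by
    intro t
    ext p
    simp only [Finset.mem_filter, Finset.mem_univ, true_and, Finset.mem_product]
    constructor
    · rintro ⟨h1, h2⟩; exact ⟨h2, h1 ▸ h2⟩
    · rintro ⟨h1, h2⟩; exact ⟨h1.trans h2.symm, h1⟩
  have hY : collCount C = ∑ t ∈ s, N t * N t := by
    rw [collCount, Finset.card_eq_sum_card_fiberwise
      (f := fun p : Fin m × Fin m => C p.1) (t := s) (fun p _ => hs p.1)]
    apply Finset.sum_congr rfl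
    intro t _
    rw [hfib t, Finset.card_product]
  have hmsum : m = ∑ t ∈ s, N t := by
    have := Finset.card_eq_sum_card_fiberwise (f := C) (s := Finset.univ) (t := s)
      (fun i _ => hs i)
    simpa using this
  have hcs := Finset.sum_mul_sq_le_sq_mul_sq s (fun _ => (1:ℝ)) (fun t => (N t : ℝ))
  simp only [one_pow, one_mul, Finset.sum_const, nsmul_eq_mul, mul_one] at hcs
  rw [hY]
  push_cast
  calc ((m:ℝ))^2 = (∑ t ∈ s, (N t : ℝ))^2 := by rw [← Nat.cast_sum, ← hmsum]
    _ ≤ (s.card : ℝ) * ∑ t ∈ s, (N t : ℝ)^2 := hcs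
    _ = (s.card : ℝ) * ∑ t ∈ s, (N t : ℝ) * (N t : ℝ) := by
        congr 1; apply Finset.sum_congr rfl; intro t _; ring

private theorem sat_support (C : SatInstance n m) (hsat : SAT C) :
    ∃ s : Finset (Clause n), (∀ i, C i ∈ s) ∧
      s.card = Fintype.card (Clause n) - n.choose 3 ∧
      n.choose 3 ≤ Fintype.card (Clause n) := by
  obtain ⟨σ, hσ⟩ := hsat
  have hinj : Function.Injective (fun v : Fin n => ((v, !σ v) : Lit n)) :=
    fun a b h => congrArg Prod.fst h
  set bad : Finset (Clause n) :=
    Finset.univ.filter (fun t : Clause n => ∀ ℓ ∈ t.1, σ ℓ.1 ≠ ℓ.2) with hbad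
  have hbadcard : bad.card = n.choose 3 := by
    have key : ((Finset.univ : Finset (Fin n)).powersetCard 3).card = bad.card := by
      apply Finset.card_bij (i := fun (sv : Finset (Fin n))
          (hsv : sv ∈ (Finset.univ : Finset (Fin n)).powersetCard 3) =>
        (⟨sv.image (fun v => (v, !σ v)), by
            rw [Finset.card_image_of_injective sv hinj]
            exact (Finset.mem_powersetCard.1 hsv).2, by
            rw [Finset.image_image]
            have : (Prod.fst ∘ fun v : Fin n => ((v, !σ v) : Lit n)) = id := rfl
            rw [this, Finset.image_id]
            exact (Finset.mem_powersetCard.1 hsv).2⟩ : Clause n))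
      · intro sv hsv
        simp only [hbad, Finset.mem_filter, Finset.mem_univ, true_and]
        intro ℓ hℓ
        simp only [Finset.mem_image] at hℓ
        obtain ⟨v, _, rfl⟩ := hℓ
        simp
      · intro sv1 h1 sv2 h2 heq
        have hid : ∀ sv : Finset (Fin n),
            Finset.image (Prod.fst ∘ fun v : Fin n => ((v, !σ v) : Lit n)) sv = sv := fun sv => by
          rw [show (Prod.fst ∘ fun v : Fin n => ((v, !σ v) : Lit n)) = id from rfl,
            Finset.image_id]
        have := congrArg (fun t : Clause n => t.1.image Prod.fst) heq
        simp only [Finset.image_image] at this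
        rwa [hid, hid] at this
      · intro t ht
        refine ⟨t.1.image Prod.fst, ?_, ?_⟩
        · exact Finset.mem_powersetCard.2 ⟨Finset.subset_univ _, t.2.2⟩
        · apply Subtype.ext
          simp only
          ext ℓ
          simp only [Finset.mem_image, hbad, Finset.mem_filter] at *
          constructor
          · rintro ⟨v, ⟨ℓ', hℓ', rfl⟩, rfl⟩
            have hne := ht.2 ℓ' hℓ'
            have : ℓ'.2 = !σ ℓ'.1 := by
              cases hb : ℓ'.2 <;> cases hs : σ ℓ'.1 <;> simp_all
            rw [← this]
            exact hℓ'
          · intro hℓ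
            refine ⟨ℓ.1, ⟨ℓ, hℓ, rfl⟩, ?_⟩
            have hne := ht.2 ℓ hℓ
            have : ℓ.2 = !σ ℓ.1 := by
              cases hb : ℓ.2 <;> cases hs : σ ℓ.1 <;> simp_all
            rw [← this]
    rw [← key, Finset.card_powersetCard, Finset.card_univ, Fintype.card_fin]
  refine ⟨Finset.univ \ bad, ?_, ?_, ?_⟩
  · intro i
    rw [Finset.mem_sdiff]
    refine ⟨Finset.mem_univ _, ?_⟩
    intro hmem
    obtain ⟨ℓ, hℓ, hℓ2⟩ := hσ i
    exact (Finset.mem_filter.1 hmem).2 ℓ hℓ hℓ2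
  · rw [Finset.card_sdiff_of_subset (Finset.subset_univ bad), Finset.card_univ, hbadcard]
  · rw [← hbadcard]; exact (Finset.card_le_univ bad).trans_eq Finset.card_univ

end Stmt0Aux

set_option maxHeartbeats 2000000 in
/-- For all integers `n ≥ 3` and `m ≥ 56·binom(n,3)`, every probability distribution
`D ∈ 𝔇₂(n,m)` satisfies `Pr_{C∼D}[SAT(C)] ≤ 56·binom(n,3)/m`. -/
theorem stmt0 (n m : ℕ) (hn : 3 ≤ n) (hm : 56 * n.choose 3 ≤ m)
    (D : SatInstance n m → ℝ) (hD : IsDistribution D) (h2 : KWiseUniform n m 2 D) :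
    pr D SAT ≤ 56 * (n.choose 3 : ℝ) / m := by
  classical
  have hch1 : 1 ≤ n.choose 3 := Nat.choose_pos hn
  have hc31 : (1:ℝ) ≤ (n.choose 3 : ℝ) := by exact_mod_cast hch1
  have hc3pos : (0:ℝ) < (n.choose 3 : ℝ) := lt_of_lt_of_le one_pos hc31
  have hm56 : 56 ≤ m := le_trans (by omega : 56 ≤ 56 * n.choose 3) hm
  have hmpos : (0:ℝ) < (m:ℝ) := by exact_mod_cast lt_of_lt_of_le (by norm_num) hm56
  have hm2 : 2 ≤ m := by omega
  set i0 : Fin m := ⟨0, by omega⟩ with hi0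
  set j0 : Fin m := ⟨1, by omega⟩ with hj0
  have hij : i0 ≠ j0 := by
    intro h
    have := congrArg Fin.val h
    simp [hi0, hj0] at this
  -- Step 1: the number of clauses is 8 * (n choose 3)
  have hK : (Fintype.card (Clause n) : ℝ) = 8 * (n.choose 3 : ℝ) := by
    have h1 := total_pair D i0 j0
    rw [hD.2] at h1
    rw [Finset.sum_congr rfl (fun tt' _ => pair_pr D h2 i0 j0 hij tt'.1 tt'.2),
      Finset.sum_const, Finset.card_univ, Fintype.card_prod, nsmul_eq_mul] at h1
    have h8 : (0:ℝ) < 8 * (n.choose 3 : ℝ) := by linarith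
    have hKnn : (0:ℝ) ≤ (Fintype.card (Clause n) : ℝ) := Nat.cast_nonneg _
    have hKK : ((Fintype.card (Clause n) : ℝ))^2 = (8 * (n.choose 3 : ℝ))^2 := by
      push_cast at h1
      field_simp at h1
      nlinarith [h1]
    have hfact : ((Fintype.card (Clause n) : ℝ) - 8 * (n.choose 3 : ℝ))
        * ((Fintype.card (Clause n) : ℝ) + 8 * (n.choose 3 : ℝ)) = 0 := by nlinarith [hKK]
    rcases mul_eq_zero.1 hfact with h | h
    · linarith
    · linarith
  -- Step 2: collision probabilities
  have hcoll : ∀ i j : Fin m, i ≠ j →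
      pr D (fun C => C i = C j) = 1 / (8 * (n.choose 3 : ℝ)) := by
    intro i j hijne
    rw [coll_pr_decomp,
      Finset.sum_congr rfl (fun t _ => pair_pr D h2 i j hijne t t),
      Finset.sum_const, Finset.card_univ, nsmul_eq_mul, hK]
    field_simp
  have hdiag : ∀ i : Fin m, pr D (fun C => C i = C i) = 1 := by
    intro i
    rw [pr, ← hD.2]
    apply Finset.sum_congr _ (fun _ _ => rfl)
    ext C
    simp
  -- Step 3: the expected collision count
  have hEY : ∑ C : SatInstance n m, D C * (collCount C : ℝ)
      = m + ((m:ℝ)^2 - m) * (1 / (8 * (n.choose 3 : ℝ))) := by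
    rw [exp_coll, ← sum_ite_pairs (m := m) (1 / (8 * (n.choose 3 : ℝ)))]
    apply Finset.sum_congr rfl
    intro q _
    by_cases h : q.1 = q.2
    · rw [if_pos h, ← hdiag q.1]
      congr 1
      funext C
      rw [h]
    · rw [if_neg h]
      exact hcoll q.1 q.2 h
  -- Step 4: pointwise lower bounds on the collision count
  have hall : ∀ C : SatInstance n m,
      ((m:ℝ))^2 ≤ (8 * (n.choose 3 : ℝ)) * (collCount C : ℝ) := by
    intro C
    have h := cauchy_pointwise C Finset.univ (fun i => Finset.mem_univ _)
    rwa [Finset.card_univ, hK] at h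
  have hsatb : ∀ C : SatInstance n m, SAT C →
      ((m:ℝ))^2 ≤ (7 * (n.choose 3 : ℝ)) * (collCount C : ℝ) := by
    intro C hC
    obtain ⟨s, hmem, hcard, hle⟩ := sat_support C hC
    have h := cauchy_pointwise C s hmem
    have hcast : (s.card : ℝ) = 7 * (n.choose 3 : ℝ) := by
      rw [hcard, Nat.cast_sub hle, hK]
      ring
    rwa [hcast] at h
  -- Step 5: combine
  set S1 : ℝ := ∑ C ∈ Finset.univ.filter SAT, D C * (collCount C : ℝ) with hS1def
  set S2 : ℝ := ∑ C ∈ Finset.univ.filter (fun C => ¬ SAT C), D C * (collCount C : ℝ) with hS2def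
  have hsplit : S1 + S2 = ∑ C : SatInstance n m, D C * (collCount C : ℝ) :=
    Finset.sum_filter_add_sum_filter_not Finset.univ SAT _
  have hq : pr D SAT + (∑ C ∈ Finset.univ.filter (fun C => ¬ SAT C), D C) = 1 := by
    rw [pr, Finset.sum_filter_add_sum_filter_not]
    exact hD.2
  have hB1 : pr D SAT * ((m:ℝ))^2 ≤ (7 * (n.choose 3 : ℝ)) * S1 := by
    rw [pr, Finset.sum_mul, hS1def, Finset.mul_sum]
    apply Finset.sum_le_sum
    intro C hC
    have hs := hsatb C (Finset.mem_filter.1 hC).2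
    calc D C * ((m:ℝ))^2 ≤ D C * ((7 * (n.choose 3 : ℝ)) * (collCount C : ℝ)) :=
          mul_le_mul_of_nonneg_left hs (hD.1 C)
      _ = 7 * (n.choose 3 : ℝ) * (D C * (collCount C : ℝ)) := by ring
  have hB2 : (1 - pr D SAT) * ((m:ℝ))^2 ≤ (8 * (n.choose 3 : ℝ)) * S2 := by
    have h1 : (1 - pr D SAT) = ∑ C ∈ Finset.univ.filter (fun C => ¬ SAT C), D C := by
      linarith [hq]
    rw [h1, Finset.sum_mul, hS2def, Finset.mul_sum]
    apply Finset.sum_le_sum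
    intro C _
    calc D C * ((m:ℝ))^2 ≤ D C * ((8 * (n.choose 3 : ℝ)) * (collCount C : ℝ)) :=
          mul_le_mul_of_nonneg_left (hall C) (hD.1 C)
      _ = 8 * (n.choose 3 : ℝ) * (D C * (collCount C : ℝ)) := by ring
  have hsum : 8 * (pr D SAT * ((m:ℝ))^2) + 7 * ((1 - pr D SAT) * ((m:ℝ))^2)
      ≤ 56 * (n.choose 3 : ℝ) * (m + ((m:ℝ)^2 - m) * (1 / (8 * (n.choose 3 : ℝ)))) := by
    calc 8 * (pr D SAT * ((m:ℝ))^2) + 7 * ((1 - pr D SAT) * ((m:ℝ))^2)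
        ≤ 8 * ((7 * (n.choose 3 : ℝ)) * S1) + 7 * ((8 * (n.choose 3 : ℝ)) * S2) := by
          have := mul_le_mul_of_nonneg_left hB1 (by norm_num : (0:ℝ) ≤ 8)
          have := mul_le_mul_of_nonneg_left hB2 (by norm_num : (0:ℝ) ≤ 7)
          linarith
      _ = 56 * (n.choose 3 : ℝ) * (S1 + S2) := by ring
      _ = 56 * (n.choose 3 : ℝ) * (m + ((m:ℝ)^2 - m) * (1 / (8 * (n.choose 3 : ℝ)))) := by
          rw [hsplit, hEY]
  have hrhs : 56 * (n.choose 3 : ℝ) * (m + ((m:ℝ)^2 - m) * (1 / (8 * (n.choose 3 : ℝ))))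
      = 56 * (n.choose 3 : ℝ) * m + 7 * ((m:ℝ)^2 - m) := by
    field_simp
    ring
  have hkey : pr D SAT * ((m:ℝ))^2 ≤ 56 * (n.choose 3 : ℝ) * m - 7 * m := by
    rw [hrhs] at hsum
    nlinarith [hsum]
  rw [le_div_iff₀ hmpos]
  have hfin : (pr D SAT * (m:ℝ)) * (m:ℝ) ≤ (56 * (n.choose 3 : ℝ) - 7) * (m:ℝ) := by
    nlinarith [hkey]
  have := le_of_mul_le_mul_right hfin hmpos
  linarith
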